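/- Let C and D be m×m nonnegative real matrices such that C + D is stochastic and C + D is irreducible. If D has at least one positive entry, then the spectral radius of C is strictly less than 1, and consequently the matrix I − C is invertible. -/

import Mathlib

open Matrix

/-- A matrix `M` is irreducible if for every pair of indices some power has a
positive entry. -/
def MatrixIrreducible {m : ℕ} (M : Matrix (Fin m) (Fin m) ℝ) : Prop :=
  ∀ i j, ∃ n : ℕ, 0 < (M ^ n) i j

/-- If `C + D` is an irreducible stochastic matrix and `D ≠ 0`, then the spectral
radius of `C` is strictly less than `1`, and `I - C` is invertible. -/
theorem stmt_1 (m : ℕ) (C D : Matrix (Fin m) (Fin m) ℝ)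
    (hC : ∀ i j, 0 ≤ C i j) (hD : ∀ i j, 0 ≤ D i j)
    (hstoch : (C + D) *ᵥ (fun _ => (1 : ℝ)) = fun _ => 1)
    (hirr : MatrixIrreducible (C + D))
    (hDpos : ∃ i j, 0 < D i j) :
    (∀ μ ∈ spectrum ℂ (C.map (Complex.ofReal ·)), ‖μ‖ < 1) ∧
      IsUnit ((1 : Matrix (Fin m) (Fin m) ℝ) - C) := by
  obtain ⟨i0, j0, hij0⟩ := hDpos
  haveI : Nonempty (Fin m) := ⟨i0⟩
  -- row sums of C + D are 1
  have hrow : ∀ i, (∑ j, C i j) + (∑ j, D i j) = 1 := by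
    intro i
    have h := congrFun hstoch i
    simp only [Matrix.mulVec, dotProduct, Matrix.add_apply, mul_one] at h
    rw [← h, Finset.sum_add_distrib]
  have hs_le : ∀ i, ∑ j, C i j ≤ 1 := by
    intro i
    have h := hrow i
    have h2 : (0:ℝ) ≤ ∑ j, D i j := Finset.sum_nonneg fun j _ => hD i j
    linarith
  have hs0 : ∑ j, C i0 j < 1 := by
    have h := hrow i0
    have h2 : D i0 j0 ≤ ∑ j, D i0 j :=
      Finset.single_le_sum (fun j _ => hD i0 j) (Finset.mem_univ j0)
    linarith
  -- powers of C are nonnegative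
  have hpow : ∀ n i j, 0 ≤ (C ^ n) i j := by
    intro n
    induction n with
    | zero =>
      intro i j
      rw [pow_zero]
      by_cases h : i = j <;> simp [Matrix.one_apply, h]
    | succ n ih =>
      intro i j
      rw [pow_succ, Matrix.mul_apply]
      exact Finset.sum_nonneg fun k _ => mul_nonneg (ih i k) (hC k j)
  have hCDpow : ∀ n i j, 0 ≤ ((C + D) ^ n) i j := by
    intro n
    induction n with
    | zero =>
      intro i j
      rw [pow_zero]
      by_cases h : i = j <;> simp [Matrix.one_apply, h]
    | succ n ih =>
      intro i j
      rw [pow_succ, Matrix.mul_apply]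
      refine Finset.sum_nonneg fun k _ => mul_nonneg (ih i k) ?_
      simp only [Matrix.add_apply]
      exact add_nonneg (hC k j) (hD k j)
  -- row sums of powers
  set S : ℕ → Fin m → ℝ := fun n i => ∑ j, (C ^ n) i j with hSdef
  have hSsucc : ∀ n i, S (n + 1) i = ∑ k, (C ^ n) i k * (∑ j, C k j) := by
    intro n i
    simp only [hSdef, pow_succ, Matrix.mul_apply]
    rw [Finset.sum_comm]
    exact Finset.sum_congr rfl fun k _ => (Finset.mul_sum _ _ _).symm
  have hS0 : ∀ i, S 0 i = 1 := by
    intro i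
    simp [hSdef, Matrix.one_apply]
  have hS_step : ∀ n i, S (n + 1) i ≤ S n i := by
    intro n i
    rw [hSsucc]
    refine Finset.sum_le_sum fun k _ => ?_
    exact mul_le_of_le_one_right (hpow n i k) (hs_le k)
  have hS_le_one : ∀ n i, S n i ≤ 1 := by
    intro n
    induction n with
    | zero => intro i; rw [hS0]
    | succ n ih => intro i; exact le_trans (hS_step n i) (ih i)
  have hS_anti : ∀ i, Antitone fun n => S n i := fun i =>
    antitone_nat_of_succ_le fun n => hS_step n i
  -- strict decrease lemma
  have hstrict : ∀ n i k, 0 < (C ^ n) i k → (∑ j, C k j) < 1 → S (n + 1) i < 1 := by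
    intro n i k hk1 hk2
    rw [hSsucc]
    have h1 : ∑ p, (C ^ n) i p * (∑ j, C p j) < ∑ p, (C ^ n) i p * 1 := by
      refine Finset.sum_lt_sum (fun p _ => ?_) ⟨k, Finset.mem_univ k, ?_⟩
      · exact mul_le_mul_of_nonneg_left (hs_le p) (hpow n i p)
      · exact (mul_lt_mul_iff_right₀ hk1).mpr (by linarith)
    have h2 : ∑ p, (C ^ n) i p * 1 = S n i := by simp [hSdef]
    calc ∑ p, (C ^ n) i p * (∑ j, C p j) < S n i := by rw [← h2]; exact h1
      _ ≤ 1 := hS_le_one n i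
  -- key dichotomy
  have hkey : ∀ n i j, 0 < ((C + D) ^ n) i j → 0 < (C ^ n) i j ∨ S n i < 1 := by
    intro n
    induction n with
    | zero =>
      intro i j h
      left
      rw [pow_zero] at h ⊢
      exact h
    | succ n ih =>
      intro i j h
      rw [pow_succ, Matrix.mul_apply] at h
      have hex : ∃ k, 0 < ((C + D) ^ n) i k * (C + D) k j := by
        by_contra hc
        push_neg at hc
        have : ∑ k, ((C + D) ^ n) i k * (C + D) k j ≤ 0 :=
          Finset.sum_nonpos fun k _ => hc k
        linarith
      obtain ⟨k, hk⟩ := hex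
      have hknn : 0 ≤ ((C + D) ^ n) i k := hCDpow n i k
      have hCDkj_nn : 0 ≤ (C + D) k j := by
        simp only [Matrix.add_apply]; exact add_nonneg (hC k j) (hD k j)
      have ha : 0 < ((C + D) ^ n) i k := by
        rcases hknn.lt_or_eq with h' | h'
        · exact h'
        · rw [← h', zero_mul] at hk; linarith
      have hb : 0 < (C + D) k j := by
        rcases hCDkj_nn.lt_or_eq with h' | h'
        · exact h'
        · rw [← h', mul_zero] at hk; linarith
      rcases ih i k ha with hc1 | hc2
      · rcases (hC k j).lt_or_eq with hck | hck
        · left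
          rw [pow_succ, Matrix.mul_apply]
          exact Finset.sum_pos' (fun p _ => mul_nonneg (hpow n i p) (hC p j))
            ⟨k, Finset.mem_univ k, mul_pos hc1 hck⟩
        · -- C k j = 0, so D k j > 0
          have hdkj : 0 < D k j := by
            simp only [Matrix.add_apply] at hb; linarith
          have hsk : ∑ j', C k j' < 1 := by
            have h1 := hrow k
            have h2 : D k j ≤ ∑ j', D k j' :=
              Finset.single_le_sum (fun j' _ => hD k j') (Finset.mem_univ j)
            linarith
          exact Or.inr (hstrict n i k hc1 hsk)
      · exact Or.inr (lt_of_le_of_lt (hS_step n i) hc2)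
  -- for every i, some power has row sum < 1
  have hper : ∀ i, ∃ n, S n i < 1 := by
    intro i
    obtain ⟨n, hn⟩ := hirr i i0
    rcases hkey n i i0 hn with h1 | h2
    · exact ⟨n + 1, hstrict n i i0 h1 hs0⟩
    · exact ⟨n, h2⟩
  choose f hf using hper
  set N : ℕ := Finset.univ.sup f with hNdef
  have hSN : ∀ i, S N i < 1 := by
    intro i
    have hle : f i ≤ N := Finset.le_sup (Finset.mem_univ i)
    exact lt_of_le_of_lt (hS_anti i hle) (hf i)
  -- complex powers
  have hMpow : ∀ n : ℕ, (C.map (Complex.ofReal ·)) ^ n = (C ^ n).map (Complex.ofReal ·) := by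
    intro n
    induction n with
    | zero =>
      ext i j
      by_cases h : i = j <;> simp [Matrix.one_apply, h, Matrix.map_apply]
    | succ n ih =>
      rw [pow_succ, pow_succ, ih]
      ext i j
      simp only [Matrix.mul_apply, Matrix.map_apply]
      push_cast
      rfl
  -- first claim
  have main : ∀ μ ∈ spectrum ℂ (C.map (Complex.ofReal ·)), ‖μ‖ < 1 := by
    intro μ hμ
    rw [spectrum.mem_iff] at hμ
    have hdet0 : (algebraMap ℂ (Matrix (Fin m) (Fin m) ℂ) μ - C.map (Complex.ofReal ·)).det = 0 := by
      by_contra hne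
      exact hμ ((Matrix.isUnit_iff_isUnit_det _).mpr (isUnit_iff_ne_zero.mpr hne))
    obtain ⟨v, hv0, hv⟩ := (Matrix.exists_mulVec_eq_zero_iff).mpr hdet0
    have hev : (C.map (Complex.ofReal ·)) *ᵥ v = μ • v := by
      have h1 : (algebraMap ℂ (Matrix (Fin m) (Fin m) ℂ) μ) *ᵥ v
          - (C.map (Complex.ofReal ·)) *ᵥ v = 0 := by
        rw [← Matrix.sub_mulVec]; exact hv
      have h2 : (algebraMap ℂ (Matrix (Fin m) (Fin m) ℂ) μ) *ᵥ v = μ • v := by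
        rw [Algebra.algebraMap_eq_smul_one, Matrix.smul_mulVec, Matrix.one_mulVec]
      rw [h2, sub_eq_zero] at h1
      exact h1.symm
    have hevn : ∀ n : ℕ, ((C ^ n).map (Complex.ofReal ·)) *ᵥ v = (μ ^ n) • v := by
      intro n
      induction n with
      | zero => simp [Matrix.map_one, Matrix.one_mulVec]
      | succ n ih =>
        rw [← hMpow, pow_succ', ← Matrix.mulVec_mulVec, hMpow, ih, Matrix.mulVec_smul, hev,
          smul_smul, ← pow_succ]
    -- pick index with maximal |v i|
    obtain ⟨i, _, hi⟩ := Finset.univ.exists_max_image (fun j => ‖v j‖) Finset.univ_nonempty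
    have hvi : 0 < ‖v i‖ := by
      rcases Function.ne_iff.mp hv0 with ⟨j, hj⟩
      exact lt_of_lt_of_le (norm_pos_iff.mpr hj) (hi j (Finset.mem_univ j))
    have heq : ((C ^ N).map (Complex.ofReal ·) *ᵥ v) i = μ ^ N * v i := by
      rw [hevn N]; rfl
    have hbound : ‖μ‖ ^ N * ‖v i‖ < 1 * ‖v i‖ := by
      have h1 : ‖μ ^ N * v i‖ ≤ ∑ j, (C ^ N) i j * ‖v j‖ := by
        rw [← heq]
        simp only [Matrix.mulVec, dotProduct, Matrix.map_apply]
        refine le_trans (norm_sum_le _ _) (Finset.sum_le_sum fun j _ => ?_)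
        rw [norm_mul, Complex.norm_real, Real.norm_of_nonneg (hpow N i j)]
      have h2 : ∑ j, (C ^ N) i j * ‖v j‖ ≤ ∑ j, (C ^ N) i j * ‖v i‖ :=
        Finset.sum_le_sum fun j _ =>
          mul_le_mul_of_nonneg_left (hi j (Finset.mem_univ j)) (hpow N i j)
      have h3 : ∑ j, (C ^ N) i j * ‖v i‖ = S N i * ‖v i‖ := by
        rw [← Finset.sum_mul]
      have h4 : S N i * ‖v i‖ < 1 * ‖v i‖ :=
        (mul_lt_mul_of_pos_right (hSN i) hvi)
      calc ‖μ‖ ^ N * ‖v i‖ = ‖μ ^ N * v i‖ := by rw [norm_mul, norm_pow]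
        _ ≤ ∑ j, (C ^ N) i j * ‖v j‖ := h1
        _ ≤ S N i * ‖v i‖ := by rw [← h3]; exact h2
        _ < 1 * ‖v i‖ := h4
    have hpowlt : ‖μ‖ ^ N < 1 := by
      have := (mul_lt_mul_iff_left₀ hvi).mp hbound
      linarith
    by_contra hge
    push_neg at hge
    have : (1:ℝ) ≤ ‖μ‖ ^ N := one_le_pow₀ hge
    linarith
  refine ⟨main, ?_⟩
  -- invertibility of 1 - C
  rw [Matrix.isUnit_iff_isUnit_det, isUnit_iff_ne_zero]
  intro hdet
  have hmap : ((1 : Matrix (Fin m) (Fin m) ℝ) - C).map (Complex.ofReal ·)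
      = 1 - C.map (Complex.ofReal ·) := by
    ext i j
    by_cases h : i = j <;>
      simp [Matrix.map_apply, Matrix.sub_apply, Matrix.one_apply, h]
  have hdetC : ((1 : Matrix (Fin m) (Fin m) ℂ) - C.map (Complex.ofReal ·)).det = 0 := by
    rw [← hmap]
    have : ((1 : Matrix (Fin m) (Fin m) ℝ) - C).map (Complex.ofReal ·)
        = Complex.ofRealHom.mapMatrix ((1 : Matrix (Fin m) (Fin m) ℝ) - C) := rfl
    rw [this, ← RingHom.map_det, hdet, map_zero]
  have h1mem : (1 : ℂ) ∈ spectrum ℂ (C.map (Complex.ofReal ·)) := by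
    rw [spectrum.mem_iff, Matrix.isUnit_iff_isUnit_det]
    rw [show (algebraMap ℂ (Matrix (Fin m) (Fin m) ℂ)) 1 = 1 from map_one _, hdetC]
    exact fun h => by simp at h
  have := main 1 h1mem
  simp at this
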